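/- Let R, C : H → ℝ with a classifier ĥ satisfying C(ĥ) ≤ ε + Δ_C, and suppose: (a) R(ĥ) − R(h̃) ≤ R(ĥ) − R(h*) for the Bayes-optimal feasible classifier h*, where h*(x) = λ* p(x) + (1−λ*) g(x); (b) R(h) = E_x[p(x)·φ(h(x))]; (c) ‖φ(z)‖_∞ ≤ B; (d) each φ_y is Φ-Lipschitz w.r.t. L₁. Then R(ĥ) − R(h̃) ≤ ε + Δ_C + (B + Φλ*) E_x[ ‖p(x) − g(x)‖₁ ], where C(h) = E_x[ g(x)·(φ(h(x)) − φ(g(x))) ]. -/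
import Mathlib


open MeasureTheory Finset

/-- Risk–churn relationship: if ĥ has churn C(ĥ) ≤ ε + Δ_C, the Bayes-optimal
feasible classifier is h* = λ* p + (1−λ*) g with R(h*) ≤ R(h̃), φ takes values in
[0,B] on the simplex and each φ_y is Φ-Lipschitz w.r.t. L₁, then
R(ĥ) − R(h̃) ≤ ε + Δ_C + (B + Φ λ*) E_x[‖p − g‖₁], where
R(h) = E_x[p(x)·φ(h(x))] and C(h) = E_x[g(x)·(φ(h(x)) − φ(g(x)))]. -/
theorem stmt_18 {X : Type*} [MeasurableSpace X] (μ : Measure X)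
    [IsProbabilityMeasure μ] {m : ℕ}
    (φ : (Fin m → ℝ) → (Fin m → ℝ)) (B Φ ε ΔC lamstar : ℝ)
    (hφbd : ∀ z ∈ stdSimplex ℝ (Fin m), ∀ i, 0 ≤ φ z i ∧ φ z i ≤ B)
    (hlip : ∀ y : Fin m, ∀ u ∈ stdSimplex ℝ (Fin m), ∀ v ∈ stdSimplex ℝ (Fin m),
      |φ u y - φ v y| ≤ Φ * ∑ i, |u i - v i|)
    (hΦ : 0 ≤ Φ)
    (p g hhat htil hst : X → Fin m → ℝ)
    (hp : ∀ x, p x ∈ stdSimplex ℝ (Fin m)) (hg : ∀ x, g x ∈ stdSimplex ℝ (Fin m))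
    (hhhat : ∀ x, hhat x ∈ stdSimplex ℝ (Fin m))
    (hhtil : ∀ x, htil x ∈ stdSimplex ℝ (Fin m))
    (hlam : lamstar ∈ Set.Icc (0 : ℝ) 1)
    (hhst : ∀ x, hst x = lamstar • p x + (1 - lamstar) • g x)
    -- (a) h* is Bayes-optimal among feasible classifiers: R(h*) ≤ R(h̃)
    (hbayes : (∫ x, ∑ i, p x i * φ (hst x) i ∂μ) ≤
      ∫ x, ∑ i, p x i * φ (htil x) i ∂μ)
    -- ĥ satisfies the (approximate) churn constraint
    (hchurn : (∫ x, ∑ i, g x i * (φ (hhat x) i - φ (g x) i) ∂μ) ≤ ε + ΔC)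
    (hInt1 : Integrable (fun x => ∑ i, p x i * φ (hhat x) i) μ)
    (hInt2 : Integrable (fun x => ∑ i, p x i * φ (htil x) i) μ)
    (hInt3 : Integrable (fun x => ∑ i, p x i * φ (hst x) i) μ)
    (hInt4 : Integrable (fun x => ∑ i, p x i * φ (g x) i) μ)
    (hInt5 : Integrable (fun x => ∑ i, g x i * (φ (hhat x) i - φ (g x) i)) μ)
    (hInt6 : Integrable (fun x => ∑ i, |p x i - g x i|) μ) :
    (∫ x, ∑ i, p x i * φ (hhat x) i ∂μ) - (∫ x, ∑ i, p x i * φ (htil x) i ∂μ) ≤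
      ε + ΔC + (B + Φ * lamstar) * ∫ x, ∑ i, |p x i - g x i| ∂μ := by
  obtain ⟨hlam0, hlam1⟩ := hlam
  have hstS : ∀ x, hst x ∈ stdSimplex ℝ (Fin m) := by
    intro x
    rw [hhst x]
    exact (convex_stdSimplex ℝ (Fin m)) (hp x) (hg x) hlam0 (by linarith) (by ring)
  -- pointwise bound 1
  have key1 : ∀ x, (∑ i, p x i * φ (hhat x) i) - (∑ i, p x i * φ (g x) i) ≤
      (∑ i, g x i * (φ (hhat x) i - φ (g x) i)) + B * ∑ i, |p x i - g x i| := by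
    intro x
    have h1 : ∀ i ∈ Finset.univ, (p x i - g x i) * (φ (hhat x) i - φ (g x) i) ≤
        B * |p x i - g x i| := by
      intro i _
      have ha := hφbd _ (hhhat x) i
      have hb := hφbd _ (hg x) i
      calc (p x i - g x i) * (φ (hhat x) i - φ (g x) i)
          ≤ |(p x i - g x i) * (φ (hhat x) i - φ (g x) i)| := le_abs_self _
        _ = |p x i - g x i| * |φ (hhat x) i - φ (g x) i| := abs_mul _ _
        _ ≤ |p x i - g x i| * B := by
            apply mul_le_mul_of_nonneg_left _ (abs_nonneg _)
            rw [abs_sub_le_iff]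
            constructor <;> linarith [ha.1, ha.2, hb.1, hb.2]
        _ = B * |p x i - g x i| := mul_comm _ _
    have hsum := Finset.sum_le_sum h1
    have hid : (∑ i, p x i * φ (hhat x) i) - (∑ i, p x i * φ (g x) i)
        - (∑ i, g x i * (φ (hhat x) i - φ (g x) i))
        = ∑ i, (p x i - g x i) * (φ (hhat x) i - φ (g x) i) := by
      rw [← Finset.sum_sub_distrib, ← Finset.sum_sub_distrib]
      exact Finset.sum_congr rfl (fun i _ => by ring)
    rw [Finset.mul_sum] at *
    linarith [hid ▸ hsum]
  -- pointwise bound 2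
  have key2 : ∀ x, (∑ i, p x i * φ (g x) i) - (∑ i, p x i * φ (hst x) i) ≤
      Φ * lamstar * ∑ i, |p x i - g x i| := by
    intro x
    have hL : ∑ j, |g x j - hst x j| = lamstar * ∑ j, |p x j - g x j| := by
      rw [Finset.mul_sum]
      refine Finset.sum_congr rfl fun j _ => ?_
      rw [hhst x]
      have h0 : g x j - (lamstar • p x + (1 - lamstar) • g x) j
          = lamstar * (g x j - p x j) := by
        simp only [Pi.add_apply, Pi.smul_apply, smul_eq_mul]; ring
      rw [h0, abs_mul, abs_of_nonneg hlam0, abs_sub_comm]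
    have hterm : ∀ i ∈ Finset.univ, p x i * (φ (g x) i - φ (hst x) i) ≤
        p x i * (Φ * (lamstar * ∑ j, |p x j - g x j|)) := by
      intro i _
      refine mul_le_mul_of_nonneg_left ?_ ((hp x).1 i)
      calc φ (g x) i - φ (hst x) i ≤ |φ (g x) i - φ (hst x) i| := le_abs_self _
        _ ≤ Φ * ∑ j, |g x j - hst x j| := hlip i _ (hg x) _ (hstS x)
        _ = Φ * (lamstar * ∑ j, |p x j - g x j|) := by rw [hL]
    have hsum := Finset.sum_le_sum hterm
    rw [← Finset.sum_mul, (hp x).2, one_mul] at hsum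
    rw [← Finset.sum_sub_distrib] at *
    calc (∑ i, (p x i * φ (g x) i - p x i * φ (hst x) i))
        = ∑ i, p x i * (φ (g x) i - φ (hst x) i) :=
          Finset.sum_congr rfl (fun i _ => by ring)
      _ ≤ Φ * (lamstar * ∑ j, |p x j - g x j|) := hsum
      _ = Φ * lamstar * ∑ i, |p x i - g x i| := by ring
  -- integrate the bounds
  have int1 : (∫ x, ∑ i, p x i * φ (hhat x) i ∂μ) - (∫ x, ∑ i, p x i * φ (g x) i ∂μ) ≤
      (∫ x, ∑ i, g x i * (φ (hhat x) i - φ (g x) i) ∂μ) +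
        B * ∫ x, ∑ i, |p x i - g x i| ∂μ := by
    have := integral_mono (hInt1.sub hInt4) (hInt5.add (hInt6.const_mul B))
      (fun x => key1 x)
    simp only [Pi.sub_apply, Pi.add_apply] at this
    rwa [integral_sub hInt1 hInt4, integral_add hInt5 (hInt6.const_mul B),
      integral_const_mul] at this
  have int2 : (∫ x, ∑ i, p x i * φ (g x) i ∂μ) - (∫ x, ∑ i, p x i * φ (hst x) i ∂μ) ≤
      Φ * lamstar * ∫ x, ∑ i, |p x i - g x i| ∂μ := by
    have := integral_mono (hInt4.sub hInt3) (hInt6.const_mul (Φ * lamstar))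
      (fun x => key2 x)
    simp only [Pi.sub_apply] at this
    rwa [integral_sub hInt4 hInt3, integral_const_mul] at this
  nlinarith [hbayes, hchurn, int1, int2]
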